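/- For α, β > -1, n ≥ 1, k ≥ 0, and x ∈ [0,1]: B_n^{α,β}(e_k; x) = (nx+α+1)^{(k)} / (n+α+β+2)^{(k)}, where a^{(k)} = a(a+1)···(a+k-1) is the rising factorial. In particular, B_n^{α,β} maps polynomials of degree k to polynomials of degree k, and λ_{n,k} := n^k/(n+α+β+2)^{(k)} is an eigenvalue of B_n^{α,β} acting on polynomials. -/

import Mathlib

open MeasureTheory intervalIntegral Filter

/-- The Beta operator with Jacobi weights: `B_n^{α,β}(f;x)`. -/
noncomputable def Bop (n α β : ℝ) (f : ℝ → ℝ) (x : ℝ) : ℝ :=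
  (∫ t in (0:ℝ)..1, t ^ (n * x + α) * (1 - t) ^ (n - n * x + β) * f t) /
  (∫ t in (0:ℝ)..1, t ^ (n * x + α) * (1 - t) ^ (n - n * x + β))

/-- The `m`-th central moment `T_{n,m}^{α,β}(x)`. -/
noncomputable def T (n α β : ℝ) (m : ℕ) (x : ℝ) : ℝ :=
  Bop n α β (fun t => (t - x) ^ m) x


/-- The Beta operator extended to the limiting cases `α = -1` (interpolation at `0`)
and `β = -1` (interpolation at `1`). -/
noncomputable def BopE (n α β : ℝ) (f : ℝ → ℝ) (x : ℝ) : ℝ :=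
  if α = -1 ∧ x = 0 then f 0
  else if β = -1 ∧ x = 1 then f 1
  else Bop n α β f x

/-- The `m`-th central moment of the extended Beta operator. -/
noncomputable def TE (n α β : ℝ) (m : ℕ) (x : ℝ) : ℝ :=
  BopE n α β (fun t => (t - x) ^ m) x

open Polynomial

section Aux

lemma rbeta_integrable {a b : ℝ} (ha : -1 < a) (hb : -1 < b) :
    IntervalIntegrable (fun t : ℝ => t ^ a * (1 - t) ^ b) volume 0 1 := by
  have h := Complex.betaIntegral_convergent (u := (a : ℂ) + 1) (v := (b : ℂ) + 1)
    (by simp; linarith) (by simp; linarith)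
  rw [intervalIntegrable_iff_integrableOn_Ioc_of_le zero_le_one] at h ⊢
  have h2 : IntegrableOn (fun t : ℝ => ((t ^ a * (1 - t) ^ b : ℝ) : ℂ)) (Set.Ioc 0 1) volume := by
    refine h.congr_fun ?_ measurableSet_Ioc
    intro t ht
    simp only [add_sub_cancel_right]
    rw [Complex.ofReal_mul, Complex.ofReal_cpow ht.1.le, Complex.ofReal_cpow (by linarith [ht.2])]
    push_cast
    ring
  have h3 := MeasureTheory.IntegrableOn.congr_fun h2.re (g := fun t : ℝ => t ^ a * (1 - t) ^ b)
    (fun t _ => by simp) measurableSet_Ioc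
  exact h3

lemma rbeta_eq {a b : ℝ} (ha : -1 < a) (hb : -1 < b) :
    ∫ t in (0:ℝ)..1, t ^ a * (1 - t) ^ b =
      Real.Gamma (a + 1) * Real.Gamma (b + 1) / Real.Gamma (a + b + 2) := by
  have h := Complex.Gamma_mul_Gamma_eq_betaIntegral (s := (a : ℂ) + 1) (t := (b : ℂ) + 1)
    (by simp; linarith) (by simp; linarith)
  have hbeta : Complex.betaIntegral ((a : ℂ) + 1) ((b : ℂ) + 1)
      = ((∫ t in (0:ℝ)..1, t ^ a * (1 - t) ^ b : ℝ) : ℂ) := by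
    rw [Complex.betaIntegral, ← intervalIntegral.integral_ofReal]
    refine intervalIntegral.integral_congr ?_
    intro t ht
    rw [Set.uIcc_of_le zero_le_one] at ht
    simp only [add_sub_cancel_right]
    rw [Complex.ofReal_mul, Complex.ofReal_cpow ht.1, Complex.ofReal_cpow (by linarith [ht.2])]
    push_cast
    ring
  rw [hbeta] at h
  have e1 : ((a : ℂ) + 1) = ((a + 1 : ℝ) : ℂ) := by push_cast; ring
  have e2 : ((b : ℂ) + 1) = ((b + 1 : ℝ) : ℂ) := by push_cast; ring
  rw [e1, e2] at h
  have e3 : ((a + 1 : ℝ) : ℂ) + ((b + 1 : ℝ) : ℂ) = ((a + b + 2 : ℝ) : ℂ) := by push_cast; ring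
  rw [e3, Complex.Gamma_ofReal, Complex.Gamma_ofReal, Complex.Gamma_ofReal] at h
  have hg : Real.Gamma (a + b + 2) ≠ 0 := (Real.Gamma_pos_of_pos (by linarith)).ne'
  have h' : Real.Gamma (a + 1) * Real.Gamma (b + 1)
      = Real.Gamma (a + b + 2) * ∫ t in (0:ℝ)..1, t ^ a * (1 - t) ^ b := by
    exact_mod_cast h
  field_simp
  linarith [h']

lemma rbeta_mono_eqOn {a b : ℝ} (ha : -1 < a) (j : ℕ) :
    ∀ t ∈ Set.Icc (0:ℝ) 1, t ^ a * (1 - t) ^ b * t ^ j = t ^ (a + j) * (1 - t) ^ b := by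
  intro t ht
  rcases eq_or_lt_of_le ht.1 with h0 | h0
  · rcases Nat.eq_zero_or_pos j with hj | hj
    · simp [hj, ← h0]
    · have h1 : (0:ℝ) < a + j := by
        have : (1:ℝ) ≤ (j:ℝ) := by exact_mod_cast hj
        linarith
      rw [← h0, Real.zero_rpow h1.ne', zero_pow hj.ne', mul_zero, zero_mul]
  · rw [← Real.rpow_natCast t j, mul_right_comm, ← Real.rpow_add h0]

lemma rbeta_mono_integrable {a b : ℝ} (ha : -1 < a) (hb : -1 < b) (j : ℕ) :
    IntervalIntegrable (fun t : ℝ => t ^ a * (1 - t) ^ b * t ^ j) volume 0 1 := by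
  have h := rbeta_integrable (a := a + j) (by linarith [Nat.cast_nonneg (α := ℝ) j]) hb
  rw [intervalIntegrable_iff_integrableOn_Ioc_of_le zero_le_one] at h ⊢
  exact h.congr_fun
    (fun t ht => (rbeta_mono_eqOn ha j t ⟨ht.1.le, ht.2⟩).symm) measurableSet_Ioc

lemma rbeta_mono {a b : ℝ} (ha : -1 < a) (hb : -1 < b) (j : ℕ) :
    ∫ t in (0:ℝ)..1, t ^ a * (1 - t) ^ b * t ^ j =
      Real.Gamma (a + 1 + j) * Real.Gamma (b + 1) / Real.Gamma (a + b + 2 + j) := by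
  have : ∫ t in (0:ℝ)..1, t ^ a * (1 - t) ^ b * t ^ j
      = ∫ t in (0:ℝ)..1, t ^ (a + j) * (1 - t) ^ b := by
    refine intervalIntegral.integral_congr ?_
    intro t ht
    rw [Set.uIcc_of_le zero_le_one] at ht
    exact rbeta_mono_eqOn ha j t ht
  rw [this, rbeta_eq (by linarith [Nat.cast_nonneg (α := ℝ) j]) hb]
  ring_nf

lemma Gamma_poch {y : ℝ} (hy : 0 < y) (j : ℕ) :
    Real.Gamma (y + j) = Real.Gamma y * (ascPochhammer ℝ j).eval y := by
  induction j with
  | zero => simp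
  | succ j ih =>
    have e : y + ((j : ℕ) + 1 : ℕ) = (y + j) + 1 := by push_cast; ring
    rw [e, Real.Gamma_add_one (by positivity), ih, ascPochhammer_succ_eval]
    ring

section Core
set_option linter.unusedSectionVars false

variable {α β : ℝ} (hα : α > -1) (hβ : β > -1) {n : ℕ} (hn : 1 ≤ n) {x : ℝ}
  (hx : x ∈ Set.Icc (0:ℝ) 1)

include hα hx in
lemma ha' : -1 < (n : ℝ) * x + α := by
  have : (0:ℝ) ≤ (n:ℝ) * x := mul_nonneg (Nat.cast_nonneg n) hx.1
  linarith

include hβ hx in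
lemma hb' : -1 < (n : ℝ) - (n : ℝ) * x + β := by
  have h1 : (0:ℝ) ≤ (n:ℝ) * (1 - x) := mul_nonneg (Nat.cast_nonneg n) (by linarith [hx.2])
  nlinarith

lemma ratio_eq {a b : ℝ} (ha : -1 < a) (hb : -1 < b) (j : ℕ) :
    (Real.Gamma (a + 1 + j) * Real.Gamma (b + 1) / Real.Gamma (a + b + 2 + j)) /
      (Real.Gamma (a + 1) * Real.Gamma (b + 1) / Real.Gamma (a + b + 2)) =
    (ascPochhammer ℝ j).eval (a + 1) / (ascPochhammer ℝ j).eval (a + b + 2) := by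
  have h1 : (0:ℝ) < a + 1 := by linarith
  have h2 : (0:ℝ) < b + 1 := by linarith
  have h3 : (0:ℝ) < a + b + 2 := by linarith
  have g1 := Real.Gamma_pos_of_pos h1
  have g2 := Real.Gamma_pos_of_pos h2
  have g3 := Real.Gamma_pos_of_pos h3
  have p3 := ascPochhammer_pos j _ h3
  have e1 : a + 1 + (j:ℝ) = (a + 1) + (j:ℕ) := by norm_num
  have e2 : a + b + 2 + (j:ℝ) = (a + b + 2) + (j:ℕ) := by norm_num
  rw [e1, e2, Gamma_poch h1, Gamma_poch h3]
  field_simp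

include hα hβ hn hx in
lemma Bop_pow (j : ℕ) :
    Bop n α β (fun t => t ^ j) x =
      (ascPochhammer ℝ j).eval ((n:ℝ) * x + α + 1) /
        (ascPochhammer ℝ j).eval ((n:ℝ) + α + β + 2) := by
  have ha := ha' (n := n) hα hx
  have hb := hb' (n := n) hβ hx
  have hab : (n:ℝ) * x + α + ((n:ℝ) - (n:ℝ) * x + β) + 2 = (n:ℝ) + α + β + 2 := by ring
  rw [Bop, rbeta_mono ha hb j, rbeta_eq ha hb, ratio_eq ha hb j, hab]

end Core

/-- The image of the monomial `X^j` under the Beta operator, as a polynomial. -/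
noncomputable def qAux (n α β : ℝ) (j : ℕ) : Polynomial ℝ :=
  Polynomial.C (((ascPochhammer ℝ j).eval (n + α + β + 2))⁻¹) *
    ((ascPochhammer ℝ j).comp (Polynomial.C n * Polynomial.X + Polynomial.C (α + 1)))

section QAux
set_option linter.unusedSectionVars false

variable {α β : ℝ} (hα : α > -1) (hβ : β > -1) {n : ℕ} (hn : 1 ≤ n)

include hα hβ in
lemma poch_c_pos (j : ℕ) : 0 < (ascPochhammer ℝ j).eval ((n:ℝ) + α + β + 2) := by
  have : (0:ℝ) ≤ (n:ℝ) := Nat.cast_nonneg n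
  exact ascPochhammer_pos j _ (by linarith)

lemma qAux_eval (j : ℕ) (x : ℝ) :
    (qAux n α β j).eval x =
      (ascPochhammer ℝ j).eval ((n:ℝ) * x + α + 1) /
        (ascPochhammer ℝ j).eval ((n:ℝ) + α + β + 2) := by
  simp [qAux, eval_comp, div_eq_inv_mul, add_assoc]

include hα hβ hn in
lemma qAux_natDegree (j : ℕ) : (qAux n α β j).natDegree = j := by
  have hnz : ((n:ℝ)) ≠ 0 := by positivity
  rw [qAux, natDegree_C_mul (inv_ne_zero (poch_c_pos hα hβ j).ne'),
    natDegree_comp, ascPochhammer_natDegree, natDegree_linear hnz, mul_one]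

include hα hβ hn in
lemma qAux_leadingCoeff (j : ℕ) :
    (qAux n α β j).coeff j =
      (n:ℝ) ^ j / (ascPochhammer ℝ j).eval ((n:ℝ) + α + β + 2) := by
  have hnz : ((n:ℝ)) ≠ 0 := by positivity
  have h1 : (qAux n α β j).coeff j = (qAux n α β j).leadingCoeff := by
    rw [leadingCoeff, qAux_natDegree hα hβ hn j]
  rw [h1, qAux, leadingCoeff_mul, leadingCoeff_C,
    leadingCoeff_comp (by rw [natDegree_linear hnz]; norm_num),
    (monic_ascPochhammer ℝ j).leadingCoeff, leadingCoeff_linear hnz,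
    ascPochhammer_natDegree, one_mul, div_eq_inv_mul]

end QAux

/-- The linear extension of `j ↦ q j` from monomials to all polynomials. -/
noncomputable def mkPhi (q : ℕ → Polynomial ℝ) : Polynomial ℝ →ₗ[ℝ] Polynomial ℝ :=
  (Finsupp.lsum ℝ (fun j => LinearMap.toSpanSingleton ℝ (Polynomial ℝ) (q j))).comp
    ((AddMonoidAlgebra.coeffLinearEquiv ℝ).toLinearMap.comp (Polynomial.toFinsuppIsoAlg ℝ).toLinearMap)

lemma toFinsuppIsoAlg_lm (p : Polynomial ℝ) :
    (Polynomial.toFinsuppIsoAlg ℝ).toLinearMap p = p.toFinsupp := rfl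

lemma mkPhi_apply (q : ℕ → Polynomial ℝ) (p : Polynomial ℝ) :
    mkPhi q p = ∑ j ∈ p.support, p.coeff j • q j := by
  simp only [mkPhi, LinearMap.comp_apply, toFinsuppIsoAlg_lm, AddMonoidAlgebra.coeffLinearEquiv_apply, Finsupp.lsum_apply]
  rw [Finsupp.sum]
  rfl

lemma mkPhi_X_pow (q : ℕ → Polynomial ℝ) (j : ℕ) : mkPhi q (X ^ j) = q j := by
  rw [mkPhi_apply, support_X_pow, Finset.sum_singleton, coeff_X_pow_self, one_smul]

lemma Bop_poly {α β : ℝ} (hα : α > -1) (hβ : β > -1) {n : ℕ} (hn : 1 ≤ n) {x : ℝ}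
    (hx : x ∈ Set.Icc (0:ℝ) 1) (p : Polynomial ℝ) :
    Bop n α β (fun t => p.eval t) x = ((mkPhi (qAux n α β)) p).eval x := by
  have ha := ha' (n := n) hα hx
  have hb := hb' (n := n) hβ hx
  have hnum : (∫ t in (0:ℝ)..1, t ^ ((n:ℝ) * x + α) * (1 - t) ^ ((n:ℝ) - (n:ℝ) * x + β) * p.eval t)
      = ∑ j ∈ p.support, p.coeff j *
          ∫ t in (0:ℝ)..1, t ^ ((n:ℝ) * x + α) * (1 - t) ^ ((n:ℝ) - (n:ℝ) * x + β) * t ^ j := by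
    have step : ∀ t : ℝ, t ^ ((n:ℝ) * x + α) * (1 - t) ^ ((n:ℝ) - (n:ℝ) * x + β) * p.eval t
        = ∑ j ∈ p.support, p.coeff j *
            (t ^ ((n:ℝ) * x + α) * (1 - t) ^ ((n:ℝ) - (n:ℝ) * x + β) * t ^ j) := by
      intro t
      rw [eval_eq_sum, Polynomial.sum_def, Finset.mul_sum]
      exact Finset.sum_congr rfl fun j _ => by ring
    simp only [step]
    rw [intervalIntegral.integral_finset_sum]
    · exact Finset.sum_congr rfl fun j _ => intervalIntegral.integral_const_mul _ _
    · exact fun j _ => (rbeta_mono_integrable ha hb j).const_mul _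
  rw [Bop, hnum, Finset.sum_div, mkPhi_apply, eval_finset_sum]
  refine Finset.sum_congr rfl fun j _ => ?_
  rw [eval_smul, smul_eq_mul, qAux_eval, mul_div_assoc]
  congr 1
  exact Bop_pow hα hβ hn hx j

lemma eigen_exists (Φ : Polynomial ℝ →ₗ[ℝ] Polynomial ℝ) (lam : ℕ → ℝ)
    (hinj : Function.Injective lam)
    (hdeg : ∀ j : ℕ, (Φ (X ^ j) - lam j • (X ^ j : Polynomial ℝ)).degree < (j : WithBot ℕ)) :
    ∀ k : ℕ, ∃ p : Polynomial ℝ, p.Monic ∧ p.natDegree = k ∧ Φ p = lam k • p := by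
  intro k
  induction k using Nat.strong_induction_on with
  | _ k IH =>
  have key : ∀ m : ℕ, m ≤ k → ∀ r : Polynomial ℝ, r.degree < (m : WithBot ℕ) →
      ∃ s : Polynomial ℝ, s.degree < (m : WithBot ℕ) ∧ Φ s + r = lam k • s := by
    intro m
    induction m with
    | zero =>
      intro _ r hr
      have : r = 0 := by
        rw [Nat.cast_zero, Nat.WithBot.lt_zero_iff, degree_eq_bot] at hr
        exact hr
      refine ⟨0, ?_, by simp [this]⟩
      simpa [degree_zero] using hr
    | succ m ihm =>
      intro hmk r hr
      have hm : m < k := lt_of_lt_of_le (Nat.lt_succ_self m) hmk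
      obtain ⟨pm, hpmM, hpmD, hpmE⟩ := IH m hm
      set c0 : ℝ := r.coeff m with hc0
      have hpm1 : pm.coeff m = 1 := by
        have := hpmM.leadingCoeff
        rwa [leadingCoeff, hpmD] at this
      have hr' : (r - c0 • pm).degree < (m : WithBot ℕ) := by
        rw [degree_lt_iff_coeff_zero]
        intro i hi
        rcases eq_or_lt_of_le hi with h | h
        · subst h
          simp [coeff_smul, hpm1, hc0]
        · have h1 : r.coeff i = 0 := by
            refine coeff_eq_zero_of_degree_lt (lt_of_lt_of_le hr ?_)
            exact_mod_cast Nat.cast_le.mpr h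
          have h2 : pm.coeff i = 0 := coeff_eq_zero_of_natDegree_lt (by omega)
          simp [h1, h2]
      obtain ⟨s', hs'd, hs'e⟩ := ihm (le_of_lt (Nat.lt_of_succ_le hmk)) (r - c0 • pm) hr'
      have hne : lam k - lam m ≠ 0 := sub_ne_zero.mpr fun h => (Nat.lt_irrefl m) (hinj h ▸ hm)
      refine ⟨s' + (c0 / (lam k - lam m)) • pm, ?_, ?_⟩
      · refine lt_of_le_of_lt (degree_add_le _ _) (max_lt ?_ ?_)
        · exact lt_of_lt_of_le hs'd (by exact_mod_cast Nat.cast_le.mpr (Nat.le_succ m))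
        · refine lt_of_le_of_lt (degree_smul_le _ _) ?_
          rw [degree_eq_natDegree hpmM.ne_zero, hpmD]
          exact_mod_cast Nat.lt_succ_self m
      · rw [map_add, LinearMap.map_smul, hpmE, eq_sub_of_add_eq hs'e]
        match_scalars <;> (field_simp; try ring)
  have hd := hdeg k
  obtain ⟨s, hsd, hse⟩ := key k le_rfl (Φ (X ^ k) - lam k • (X ^ k : Polynomial ℝ)) hd
  have hdegXk : (s : Polynomial ℝ).degree < ((X : Polynomial ℝ) ^ k).degree := by
    rwa [degree_X_pow]
  refine ⟨X ^ k + s, monic_X_pow_add hsd, ?_, ?_⟩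
  · have hdeg2 : ((X : Polynomial ℝ) ^ k + s).degree = (k : WithBot ℕ) := by
      rw [degree_add_eq_left_of_degree_lt hdegXk, degree_X_pow]
    exact natDegree_eq_of_degree_eq_some hdeg2
  · rw [map_add, eq_sub_of_add_eq hse]
    module

end Aux
theorem beta_op_monomials (α β : ℝ) (hα : α > -1) (hβ : β > -1)
    (n : ℕ) (hn : 1 ≤ n) (k : ℕ) :
    (∀ x ∈ Set.Icc (0:ℝ) 1,
      Bop n α β (fun t => t ^ k) x =
        (ascPochhammer ℝ k).eval (n * x + α + 1) /
          (ascPochhammer ℝ k).eval (n + α + β + 2)) ∧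
    (∀ p : Polynomial ℝ, p.natDegree = k →
      ∃ q : Polynomial ℝ, q.natDegree = k ∧
        ∀ x ∈ Set.Icc (0:ℝ) 1, Bop n α β (fun t => p.eval t) x = q.eval x) ∧
    ∃ p : Polynomial ℝ, p.Monic ∧ p.natDegree = k ∧
      ∀ x ∈ Set.Icc (0:ℝ) 1,
        Bop n α β (fun t => p.eval t) x =
          (n : ℝ) ^ k / (ascPochhammer ℝ k).eval (n + α + β + 2) * p.eval x := by
  have hnz : ((n:ℝ)) ≠ 0 := by positivity
  set lam : ℕ → ℝ := fun j => (n:ℝ) ^ j / (ascPochhammer ℝ j).eval ((n:ℝ) + α + β + 2) with hlam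
  have hlampos : ∀ j, 0 < lam j := fun j => by
    have := poch_c_pos (n := n) hα hβ j
    positivity
  have hanti : StrictAnti lam := by
    refine strictAnti_nat_of_succ_lt fun j => ?_
    have hp := poch_c_pos (n := n) hα hβ j
    have hcj : (0:ℝ) < (n:ℝ) + α + β + 2 + j := by
      have : (0:ℝ) ≤ (n:ℝ) := Nat.cast_nonneg n
      have : (0:ℝ) ≤ (j:ℝ) := Nat.cast_nonneg j
      linarith [Nat.cast_nonneg (α := ℝ) n]
    have hnlt : (n:ℝ) < (n:ℝ) + α + β + 2 + j := by
      have : (0:ℝ) ≤ (j:ℝ) := Nat.cast_nonneg j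
      linarith
    have hnp : (0:ℝ) < (n:ℝ) := by positivity
    simp only [hlam, ascPochhammer_succ_eval]
    rw [div_lt_div_iff₀ (by positivity) hp]
    calc (n:ℝ) ^ (j+1) * (ascPochhammer ℝ j).eval ((n:ℝ)+α+β+2)
        = ((n:ℝ) ^ j * (ascPochhammer ℝ j).eval ((n:ℝ)+α+β+2)) * (n:ℝ) := by ring
      _ < ((n:ℝ) ^ j * (ascPochhammer ℝ j).eval ((n:ℝ)+α+β+2)) * ((n:ℝ)+α+β+2+j) := by
          exact mul_lt_mul_of_pos_left hnlt (by positivity)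
      _ = (n:ℝ) ^ j * ((ascPochhammer ℝ j).eval ((n:ℝ)+α+β+2) * ((n:ℝ)+α+β+2+j)) := by ring
  have hinj : Function.Injective lam := hanti.injective
  set Φ := mkPhi (qAux n α β) with hΦ
  have hΦX : ∀ j : ℕ, Φ (X ^ j) = qAux n α β j := fun j => mkPhi_X_pow _ j
  have hdeg : ∀ j : ℕ, (Φ (X ^ j) - lam j • (X ^ j : Polynomial ℝ)).degree < (j : WithBot ℕ) := by
    intro j
    rw [degree_lt_iff_coeff_zero]
    intro i hi
    rcases eq_or_lt_of_le hi with h | h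
    · subst h
      simp only [coeff_sub, coeff_smul, smul_eq_mul, hΦX, coeff_X_pow_self,
        qAux_leadingCoeff hα hβ hn, mul_one, hlam, sub_self]
    · have h1 : (qAux n α β j).coeff i = 0 :=
        coeff_eq_zero_of_natDegree_lt (by rw [qAux_natDegree hα hβ hn]; omega)
      have h2 : ((X : Polynomial ℝ) ^ j).coeff i = 0 := by
        rw [coeff_X_pow]
        simp [Nat.ne_of_gt h]
      simp [hΦX, h1, h2]
  refine ⟨fun x hx => Bop_pow hα hβ hn hx k, ?_, ?_⟩
  · -- polynomial image has the same degree
    intro p hp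
    rcases eq_or_ne p 0 with rfl | hp0
    · refine ⟨0, hp, fun x hx => ?_⟩
      simp [Bop]
    · refine ⟨Φ p, ?_, fun x hx => Bop_poly hα hβ hn hx p⟩
      have hsum : Φ p = ∑ j ∈ p.support, p.coeff j • qAux n α β j := mkPhi_apply _ p
      have hub : (Φ p).natDegree ≤ k := by
        rw [hsum]
        refine natDegree_sum_le_of_forall_le _ _ fun j hj => ?_
        refine le_trans (natDegree_smul_le _ _) ?_
        rw [qAux_natDegree hα hβ hn]
        exact hp ▸ le_natDegree_of_mem_supp j hj
      have hck : (Φ p).coeff k ≠ 0 := by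
        have hkmem : k ∈ p.support := by
          rw [mem_support_iff, ← hp]
          exact mt leadingCoeff_eq_zero.mp hp0
        have : (Φ p).coeff k = p.coeff k * lam k := by
          rw [hsum, finset_sum_coeff]
          rw [Finset.sum_eq_single k]
          · rw [coeff_smul, smul_eq_mul, qAux_leadingCoeff hα hβ hn, hlam]
          · intro j hj hjk
            have hjk' : j < k := lt_of_le_of_ne (hp ▸ le_natDegree_of_mem_supp j hj) hjk
            have hz : (qAux ((n:ℕ):ℝ) α β j).coeff k = 0 :=
              coeff_eq_zero_of_natDegree_lt (by rw [qAux_natDegree hα hβ hn]; exact hjk')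
            rw [coeff_smul, hz, smul_zero]
          · intro h
            exact absurd hkmem h
        rw [this]
        exact mul_ne_zero (by rwa [mem_support_iff] at hkmem) (hlampos k).ne'
      exact le_antisymm hub (le_natDegree_of_ne_zero hck)
  · obtain ⟨p, hM, hD, hE⟩ := eigen_exists Φ lam hinj hdeg k
    refine ⟨p, hM, hD, fun x hx => ?_⟩
    rw [Bop_poly hα hβ hn hx p, hE, eval_smul, smul_eq_mul, hlam]
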